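/- Let (Ω,σ) be a topological dynamical system, f continuous, f̄ its ergodic minimizing value, and suppose u(ω) := - inf_{n≥1} Σ_{k=0}^{n-1}(f - f̄)(σ^k(ω)) is finite for every ω. Then for every ω ∈ Ω the identity f(ω) - f̄ = u⁺(σ(ω)) - u(ω) holds, where u⁺ = max(u,0). -/

import Mathlib

open MeasureTheory Filter Topology

noncomputable section

variable {Ω : Type*}

/-- `μ` is a `σ`-invariant Borel probability measure. -/
def IsInvProb [MeasurableSpace Ω] (σ : Ω → Ω) (μ : Measure Ω) : Prop :=
  IsProbabilityMeasure μ ∧ Measure.map σ μ = μ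

/-- Birkhoff sum `∑_{k=0}^{n-1} g(σ^k ω)`. -/
def birk (σ : Ω → Ω) (g : Ω → ℝ) (n : ℕ) (ω : Ω) : ℝ :=
  ∑ k ∈ Finset.range n, g (σ^[k] ω)

/-- The transfer function `u(ω) = - inf_{n ≥ 1} ∑_{k=0}^{n-1} (f - f̄)(σ^k ω)`. -/
def uFn (σ : Ω → Ω) (f : Ω → ℝ) (fbar : ℝ) (ω : Ω) : ℝ :=
  -(⨅ n : ℕ, birk σ (fun x => f x - fbar) (n + 1) ω)

/-- The support of a measure: points all of whose open neighborhoods have positive measure. -/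
def msupport [TopologicalSpace Ω] [MeasurableSpace Ω] (μ : Measure Ω) : Set Ω :=
  {ω | ∀ U : Set Ω, IsOpen U → ω ∈ U → 0 < μ U}

/-- `μ` is a minimizing measure for `f` with ergodic minimizing value `fbar`. -/
def IsMinimizing [MeasurableSpace Ω] (σ : Ω → Ω) (f : Ω → ℝ) (fbar : ℝ)
    (μ : Measure Ω) : Prop :=
  IsInvProb σ μ ∧ ∫ x, f x ∂μ = fbar

/-- The Mather set: union of supports of minimizing measures. -/
def MatherSet [TopologicalSpace Ω] [MeasurableSpace Ω] (σ : Ω → Ω) (f : Ω → ℝ)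
    (fbar : ℝ) : Set Ω :=
  {ω | ∃ μ : Measure Ω, IsMinimizing σ f fbar μ ∧ ω ∈ msupport μ}

/-- `fbar` is the minimum of `∫ f dμ` over invariant probability measures. -/
def IsErgMinValue [MeasurableSpace Ω] (σ : Ω → Ω) (f : Ω → ℝ) (fbar : ℝ) : Prop :=
  IsLeast {x : ℝ | ∃ μ : Measure Ω, IsInvProb σ μ ∧ ∫ w, f w ∂μ = x} fbar

lemma add_ciInf' (a : ℝ) (b : ℕ → ℝ) (hb : BddBelow (Set.range b)) :
    a + ⨅ n, b n = ⨅ n, a + b n := by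
  apply le_antisymm
  · exact le_ciInf fun n => add_le_add_right (ciInf_le hb n) a
  · have hb' : BddBelow (Set.range fun n => a + b n) := by
      obtain ⟨c, hc⟩ := hb
      refine ⟨a + c, ?_⟩
      rintro x ⟨n, rfl⟩
      exact add_le_add_right (hc ⟨n, rfl⟩) a
    have h1 : (⨅ n, a + b n) - a ≤ ⨅ n, b n :=
      le_ciInf fun n => by linarith [ciInf_le hb' n]
    linarith

lemma ciInf_shift (a : ℕ → ℝ) (h : BddBelow (Set.range a)) :
    ⨅ n, a n = min (a 0) (⨅ n, a (n + 1)) := by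
  have hb : BddBelow (Set.range fun n => a (n + 1)) := by
    refine h.mono ?_
    rintro x ⟨n, rfl⟩
    exact ⟨n + 1, rfl⟩
  apply le_antisymm
  · exact le_min (ciInf_le h 0) (le_ciInf fun n => ciInf_le h (n + 1))
  · refine le_ciInf fun n => ?_
    cases n with
    | zero => exact min_le_left _ _
    | succ m => exact (min_le_right _ _).trans (ciInf_le hb m)

lemma birk_succ_shift (σ : Ω → Ω) (g : Ω → ℝ) (n : ℕ) (ω : Ω) :
    birk σ g (n + 2) ω = g ω + birk σ g (n + 1) (σ ω) := by
  simp only [birk, Finset.sum_range_succ' (fun k => g (σ^[k] ω)) (n + 1),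
    Function.iterate_succ_apply, Function.iterate_zero_apply]
  ring

/-- the identity `f - f̄ = u⁺∘σ - u`. -/
theorem stmt1 [MetricSpace Ω] [CompactSpace Ω] [MeasurableSpace Ω] [BorelSpace Ω]
    (σ : Ω → Ω) (hσ : Continuous σ) (f : Ω → ℝ) (hf : Continuous f) (fbar : ℝ)
    (hfbar : IsErgMinValue σ f fbar)
    (hfin : ∀ ω : Ω, BddBelow (Set.range fun n : ℕ => birk σ (fun x => f x - fbar) (n + 1) ω)) :
    ∀ ω : Ω, f ω - fbar = max (uFn σ f fbar (σ ω)) 0 - uFn σ f fbar ω := by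
  intro ω
  set g : Ω → ℝ := fun x => f x - fbar with hg
  have key : (⨅ n : ℕ, birk σ g (n + 1) ω)
      = min (g ω) (g ω + ⨅ n : ℕ, birk σ g (n + 1) (σ ω)) := by
    rw [ciInf_shift _ (hfin ω)]
    congr 1
    · simp [birk]
    · rw [add_ciInf' (g ω) _ (hfin (σ ω))]
      exact iInf_congr fun n => birk_succ_shift σ g n ω
  have : uFn σ f fbar ω = max (uFn σ f fbar (σ ω)) 0 - g ω := by
    unfold uFn
    rw [← hg, key]
    rcases le_total (g ω) (g ω + ⨅ n : ℕ, birk σ g (n + 1) (σ ω)) with h | h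
    · rw [min_eq_left h, max_eq_right (by linarith)]; ring
    · rw [min_eq_right h, max_eq_left (by linarith)]; ring
  simp only [hg] at this ⊢
  linarith
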